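/- The square s₂ is positively invariant under F (F(s₂) ⊆ s₂), and every point in the interior of s₂ lies in the basin of attraction of the fixed point (π,π): for every (x,y) in the interior of s₂, the iterates Fⁿ(x,y) converge to (π,π) as n → ∞. -/

import Mathlib

noncomputable def F (a : ℝ) : ℝ × ℝ → ℝ × ℝ :=
  fun p => (p.1 + 2 * a * Real.sin p.1 + a * Real.sin p.2,
            p.2 + a * Real.sin p.1 + 2 * a * Real.sin p.2)

def s2 : Set (ℝ × ℝ) :=
  {p : ℝ × ℝ | (p.1 - Real.pi ≤ p.2 ∧ p.2 ≤ p.1) ∧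
               (-p.1 + Real.pi ≤ p.2 ∧ p.2 ≤ -p.1 + 2 * Real.pi)}

open Real Filter

lemma sin_facts {p : ℝ × ℝ} (hp : p ∈ s2) :
    0 ≤ Real.sin p.1 + Real.sin p.2 ∧
    Real.sin p.1 + Real.sin p.2 ≤ 2 * π - (p.1 + p.2) ∧
    0 ≤ Real.sin p.2 - Real.sin p.1 ∧
    Real.sin p.2 - Real.sin p.1 ≤ p.1 - p.2 ∧
    0 ≤ Real.sin p.2 := by
  obtain ⟨⟨h1, h2⟩, h3, h4⟩ := hp
  set x := p.1
  set y := p.2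
  have hpi := Real.pi_pos
  -- bounds on the half-sum and half-difference
  have hs1 : π / 2 ≤ (x + y) / 2 := by linarith
  have hs2 : (x + y) / 2 ≤ π := by linarith
  have ht1 : 0 ≤ (x - y) / 2 := by linarith
  have ht2 : (x - y) / 2 ≤ π / 2 := by linarith
  have hsin_s : 0 ≤ Real.sin ((x + y) / 2) :=
    Real.sin_nonneg_of_nonneg_of_le_pi (by linarith) hs2
  have hsin_s_le : Real.sin ((x + y) / 2) ≤ π - (x + y) / 2 := by
    have := Real.sin_le (x := π - (x + y) / 2) (by linarith)
    rwa [Real.sin_pi_sub] at this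
  have hcos_t : 0 ≤ Real.cos ((x - y) / 2) :=
    Real.cos_nonneg_of_mem_Icc ⟨by linarith, ht2⟩
  have hcos_t1 : Real.cos ((x - y) / 2) ≤ 1 := Real.cos_le_one _
  have hsin_t : 0 ≤ Real.sin ((x - y) / 2) :=
    Real.sin_nonneg_of_nonneg_of_le_pi ht1 (by linarith)
  have hsin_t_le : Real.sin ((x - y) / 2) ≤ (x - y) / 2 := Real.sin_le ht1
  have hcos_s : Real.cos ((x + y) / 2) ≤ 0 :=
    Real.cos_nonpos_of_pi_div_two_le_of_le hs1 (by linarith)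
  have hcos_s1 : -1 ≤ Real.cos ((x + y) / 2) := Real.neg_one_le_cos _
  have hA : Real.sin x + Real.sin y
      = 2 * Real.sin ((x + y) / 2) * Real.cos ((x - y) / 2) := by
    have h := Real.sin_sub_sin x (-y)
    simpa [Real.sin_neg, sub_neg_eq_add, ← sub_eq_add_neg] using h
  have hB : Real.sin x - Real.sin y
      = 2 * Real.sin ((x - y) / 2) * Real.cos ((x + y) / 2) := Real.sin_sub_sin x y
  have hy0 : 0 ≤ y := by linarith
  have hyπ : y ≤ π := by linarith
  refine ⟨?_, ?_, ?_, ?_, Real.sin_nonneg_of_nonneg_of_le_pi hy0 hyπ⟩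
  · rw [hA]; positivity
  · rw [hA]
    nlinarith [mul_le_mul_of_nonneg_left hcos_t1 hsin_s,
      mul_le_mul_of_nonneg_right hsin_s_le hcos_t]
  · nlinarith [mul_nonneg hsin_t (neg_nonneg.2 hcos_s)]
  · nlinarith [mul_le_mul_of_nonneg_left hcos_s1 hsin_t, hsin_t_le]

lemma F_mem_s2 {a : ℝ} (ha : 0 < a) (ha' : a < 1/6) {p : ℝ × ℝ} (hp : p ∈ s2) :
    F a p ∈ s2 := by
  obtain ⟨hA0, hA1, hB0, hB1, hsy⟩ := sin_facts hp
  obtain ⟨⟨h1, h2⟩, h3, h4⟩ := hp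
  set x := p.1
  set y := p.2
  have key1 : 0 ≤ a * (Real.sin x + Real.sin y) := mul_nonneg ha.le hA0
  have key2 : a * (Real.sin x + Real.sin y) ≤ a * (2 * π - (x + y)) :=
    mul_le_mul_of_nonneg_left hA1 ha.le
  have key3 : 0 ≤ a * (Real.sin y - Real.sin x) :=
    mul_nonneg ha.le hB0
  have key4 : a * (Real.sin y - Real.sin x) ≤ a * (x - y) :=
    mul_le_mul_of_nonneg_left hB1 ha.le
  have key5 : a * (x - y) ≤ 1 * (x - y) :=
    mul_le_mul_of_nonneg_right (by linarith) (by linarith)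
  have key6 : a * (2 * π - (x + y)) ≤ (1/3) * (2 * π - (x + y)) :=
    mul_le_mul_of_nonneg_right (by linarith) (by linarith)
  constructor
  · constructor
    · show (x + 2*a*Real.sin x + a*Real.sin y) - π ≤ y + a*Real.sin x + 2*a*Real.sin y
      nlinarith
    · show y + a*Real.sin x + 2*a*Real.sin y ≤ x + 2*a*Real.sin x + a*Real.sin y
      nlinarith
  · constructor
    · show -(x + 2*a*Real.sin x + a*Real.sin y) + π ≤ y + a*Real.sin x + 2*a*Real.sin y
      nlinarith
    · show y + a*Real.sin x + 2*a*Real.sin y ≤ -(x + 2*a*Real.sin x + a*Real.sin y) + 2*π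
      nlinarith

theorem stmt_19 (a : ℝ) (ha : 0 < a) (ha' : a < 1/6) :
    F a '' s2 ⊆ s2 ∧
    ∀ p ∈ interior s2,
      Filter.Tendsto (fun n => (F a)^[n] p) Filter.atTop
        (nhds ((Real.pi, Real.pi) : ℝ × ℝ)) := by
  constructor
  · rintro _ ⟨p, hp, rfl⟩
    exact F_mem_s2 ha ha' hp
  · intro p hp
    have hps : p ∈ s2 := interior_subset hp
    -- interior point has p.2 > 0
    have hy0 : 0 < p.2 := by
      rw [mem_interior_iff_mem_nhds, Metric.mem_nhds_iff] at hp
      obtain ⟨ε, hε, hball⟩ := hp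
      have hq : ((p.1, p.2 - ε/2) : ℝ × ℝ) ∈ s2 := by
        apply hball
        rw [Metric.mem_ball, Prod.dist_eq]
        show max (dist p.1 p.1) (dist (p.2 - ε/2) p.2) < ε
        have h2 : dist (p.2 - ε/2) p.2 = ε/2 := by
          rw [Real.dist_eq, show p.2 - ε/2 - p.2 = -(ε/2) by ring, abs_neg,
            abs_of_nonneg (by linarith)]
        rw [dist_self, h2, max_lt_iff]
        constructor <;> linarith
      obtain ⟨⟨h1, _⟩, h3, _⟩ := hq
      simp only at h1 h3
      linarith
    set q : ℕ → ℝ × ℝ := fun n => (F a)^[n] p with hqdef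
    have hq0 : q 0 = p := rfl
    have hqsucc : ∀ n, q (n + 1) = F a (q n) := by
      intro n; simp [hqdef, Function.iterate_succ_apply']
    have hqs2 : ∀ n, q n ∈ s2 := by
      intro n; induction n with
      | zero => exact hps
      | succ n ih => rw [hqsucc]; exact F_mem_s2 ha ha' ih
    set y : ℕ → ℝ := fun n => (q n).2 with hydef
    have hystep : ∀ n, y (n + 1) = y n + a * Real.sin (q n).1 + 2 * a * Real.sin (q n).2 := by
      intro n; simp only [hydef, hqsucc n]; rfl
    have hygrow : ∀ n, y n + a * Real.sin (y n) ≤ y (n + 1) := by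
      intro n
      obtain ⟨hA0, _, _, _, hsy⟩ := sin_facts (hqs2 n)
      have := mul_nonneg ha.le hA0
      have := mul_nonneg ha.le hsy
      rw [hystep n]
      simp only [hydef]
      nlinarith
    have hmono : Monotone y := by
      apply monotone_nat_of_le_succ
      intro n
      obtain ⟨_, _, _, _, hsy⟩ := sin_facts (hqs2 n)
      have := mul_nonneg ha.le hsy
      have := hygrow n
      simp only [hydef] at *
      linarith
    have hyπ : ∀ n, y n ≤ π := by
      intro n
      obtain ⟨⟨_, h2⟩, _, h4⟩ := hqs2 n
      simp only [hydef]; linarith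
    have hbdd : BddAbove (Set.range y) := ⟨π, by rintro _ ⟨n, rfl⟩; exact hyπ n⟩
    set L : ℝ := ⨆ n, y n with hLdef
    have hyL : Tendsto y atTop (nhds L) := tendsto_atTop_ciSup hmono hbdd
    have hLπ : L ≤ π := ciSup_le hyπ
    have hL0 : 0 < L := lt_of_lt_of_le hy0 (le_ciSup hbdd 0)
    -- sin (y n) → 0
    have hdiff : Tendsto (fun n => y (n + 1) - y n) atTop (nhds 0) := by
      have h1 : Tendsto (fun n => y (n + 1)) atTop (nhds L) :=
        hyL.comp (tendsto_add_atTop_nat 1)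
      simpa using h1.sub hyL
    have hsin0 : Tendsto (fun n => Real.sin (y n)) atTop (nhds 0) := by
      apply squeeze_zero (fun n => ?_) (fun n => ?_) (by simpa using hdiff.div_const a)
      · obtain ⟨_, _, _, _, hsy⟩ := sin_facts (hqs2 n); exact hsy
      · rw [le_div_iff₀ ha]
        have := hygrow n
        nlinarith
    have hsinL : Real.sin L = 0 := by
      have : Tendsto (fun n => Real.sin (y n)) atTop (nhds (Real.sin L)) :=
        (Real.continuous_sin.tendsto L).comp hyL
      exact tendsto_nhds_unique this hsin0
    have hLeq : L = π := by
      by_contra h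
      have hlt : L < π := lt_of_le_of_ne hLπ h
      exact absurd hsinL (ne_of_gt (Real.sin_pos_of_pos_of_lt_pi hL0 hlt))
    rw [hLeq] at hyL
    -- x n - y n → 0
    set x : ℕ → ℝ := fun n => (q n).1 with hxdef
    have hsub : Tendsto (fun n => x n - y n) atTop (nhds 0) := by
      have hg : Tendsto (fun n => 2 * π - 2 * y n) atTop (nhds 0) := by
        have := (tendsto_const_nhds (x := 2 * π) (f := atTop (α := ℕ))).sub
          (hyL.const_mul 2)
        simpa using this
      apply squeeze_zero (fun n => ?_) (fun n => ?_) hg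
      · obtain ⟨⟨_, h2⟩, _, _⟩ := hqs2 n
        simp only [hxdef, hydef]; linarith
      · obtain ⟨⟨_, h2⟩, _, h4⟩ := hqs2 n
        simp only [hxdef, hydef]; linarith
    have hxL : Tendsto x atTop (nhds π) := by
      have := hsub.add hyL
      simpa using this
    have : Tendsto (fun n => (x n, y n)) atTop (nhds ((π, π) : ℝ × ℝ)) :=
      hxL.prodMk_nhds hyL
    simpa [hxdef, hydef] using this
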